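/- arXiv:1306.6761 — 2 statements merged into one kernel-verified Lean document; each statement's English description precedes it below -/
import Mathlib

section
/- Suppose the probability measure μ on ℝ^d satisfies (H1) and L_μ(x) < ∞ for all x ∈ ℝ^d. Then condition (H2) holds if and only if the support of μ is not contained in any half-space u⁻ = {y ∈ ℝ^d : ⟨u,y⟩ ≤ 0} with u ∈ K* \ {0}. -/
open MeasureTheory ProbabilityTheory Filter
open scoped ENNReal RealInnerProductSpace Topology

/-- The Laplace transform of a measure `μ` on `ℝ^d`, with values in `ℝ≥0∞`. -/
noncomputable def laplace {d : ℕ} (μ : Measure (EuclideanSpace ℝ (Fin d)))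
    (x : EuclideanSpace ℝ (Fin d)) : ℝ≥0∞ :=
  ∫⁻ y, ENNReal.ofReal (Real.exp ⟪x, y⟫) ∂μ

/-- The dual cone `K* = {z : ⟨x,z⟩ ≥ 0 for all x ∈ K}`. -/
def dualCone {d : ℕ} (K : Set (EuclideanSpace ℝ (Fin d))) : Set (EuclideanSpace ℝ (Fin d)) :=
  {z | ∀ x ∈ K, 0 ≤ ⟪x, z⟫}

lemma coord_le_norm {d : ℕ} (x : EuclideanSpace ℝ (Fin d)) (i : Fin d) : |x i| ≤ ‖x‖ := by
  rw [EuclideanSpace.norm_eq, ← Real.sqrt_sq_eq_abs]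
  apply Real.sqrt_le_sqrt
  have := Finset.single_le_sum (f := fun j => ‖x j‖ ^ 2) (fun j _ => by positivity)
    (Finset.mem_univ i)
  simpa [Real.norm_eq_abs, sq_abs] using this

def sgn {d : ℕ} (t : Finset (Fin d)) : EuclideanSpace ℝ (Fin d) :=
  WithLp.toLp 2 (fun i => if i ∈ t then (1:ℝ) else -1)

lemma exp_inner_le_sum {d : ℕ} (x₀ x : EuclideanSpace ℝ (Fin d))
    (hx : ∀ i, |x i - x₀ i| ≤ 1) (y : EuclideanSpace ℝ (Fin d)) :
    Real.exp ⟪x, y⟫ ≤ ∑ t : Finset (Fin d), Real.exp ⟪x₀ + sgn t, y⟫ := by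
  have h1 : ⟪x, y⟫ ≤ ⟪x₀, y⟫ + ∑ i, |y i| := by
    have h0 : ⟪x, y⟫ = ⟪x₀, y⟫ + ⟪x - x₀, y⟫ := by
      rw [← inner_add_left]; congr 1; abel
    rw [h0]
    gcongr
    rw [PiLp.inner_apply]
    apply Finset.sum_le_sum
    intro i _
    calc ⟪(x - x₀) i, y i⟫ = (x - x₀) i * y i := by rw [RCLike.inner_apply', conj_trivial]
      _ ≤ |(x - x₀) i * y i| := le_abs_self _
      _ = |x i - x₀ i| * |y i| := by simp [abs_mul]
      _ ≤ 1 * |y i| := by gcongr; exact hx i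
      _ = |y i| := one_mul _
  calc Real.exp ⟪x, y⟫ ≤ Real.exp (⟪x₀, y⟫ + ∑ i, |y i|) := Real.exp_le_exp.2 h1
    _ = Real.exp ⟪x₀, y⟫ * ∏ i, Real.exp |y i| := by
        rw [Real.exp_add, Real.exp_sum]
    _ ≤ Real.exp ⟪x₀, y⟫ * ∏ i, (Real.exp (y i) + Real.exp (-(y i))) := by
        apply mul_le_mul_of_nonneg_left _ (Real.exp_pos _).le
        apply Finset.prod_le_prod (fun i _ => (Real.exp_pos _).le)
        intro i _
        rcases abs_choice (y i) with h | h <;> rw [h]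
        · exact le_add_of_nonneg_right (Real.exp_pos _).le
        · exact le_add_of_nonneg_left (Real.exp_pos _).le
    _ = ∑ t : Finset (Fin d), Real.exp ⟪x₀ + sgn t, y⟫ := by
        rw [Finset.prod_add, Finset.mul_sum, ← Finset.powerset_univ]
        apply Finset.sum_congr rfl
        intro t _
        have hs : ⟪sgn t, y⟫ = (∑ i ∈ t, y i) + ∑ i ∈ Finset.univ \ t, -(y i) := by
          rw [PiLp.inner_apply, ← Finset.sum_sdiff (Finset.subset_univ t), add_comm]
          congr 1
          · exact Finset.sum_congr rfl fun i hi => by simp [sgn, hi]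
          · exact Finset.sum_congr rfl fun i hi => by
              simp [sgn, (Finset.mem_sdiff.1 hi).2]
        rw [inner_add_left, Real.exp_add, hs, Real.exp_add, Real.exp_sum, Real.exp_sum]

lemma meas_exp_inner {d : ℕ} (x : EuclideanSpace ℝ (Fin d)) :
    Measurable (fun y : EuclideanSpace ℝ (Fin d) => ENNReal.ofReal (Real.exp ⟪x, y⟫)) :=
  (ENNReal.continuous_ofReal.comp (Real.continuous_exp.comp
    (Continuous.inner continuous_const continuous_id))).measurable

lemma laplace_continuous {d : ℕ} (μ : Measure (EuclideanSpace ℝ (Fin d)))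
    [IsProbabilityMeasure μ] (hfin : ∀ x, laplace μ x < ⊤) : Continuous (laplace μ) := by
  rw [continuous_iff_continuousAt]
  intro x₀
  show Tendsto (fun x => ∫⁻ y, ENNReal.ofReal (Real.exp ⟪x, y⟫) ∂μ) (𝓝 x₀)
    (𝓝 (∫⁻ y, ENNReal.ofReal (Real.exp ⟪x₀, y⟫) ∂μ))
  apply tendsto_lintegral_filter_of_dominated_convergence
    (fun y => ∑ t : Finset (Fin d), ENNReal.ofReal (Real.exp ⟪x₀ + sgn t, y⟫))
  · exact Eventually.of_forall fun x => meas_exp_inner x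
  · filter_upwards [Metric.closedBall_mem_nhds x₀ one_pos] with x hx
    apply ae_of_all
    intro y
    have hcoord : ∀ i, |x i - x₀ i| ≤ 1 := by
      intro i
      calc |x i - x₀ i| = |(x - x₀) i| := by simp
        _ ≤ ‖x - x₀‖ := coord_le_norm _ i
        _ ≤ 1 := by rwa [Metric.mem_closedBall, dist_eq_norm] at hx
    calc ENNReal.ofReal (Real.exp ⟪x, y⟫)
        ≤ ENNReal.ofReal (∑ t : Finset (Fin d), Real.exp ⟪x₀ + sgn t, y⟫) :=
          ENNReal.ofReal_le_ofReal (exp_inner_le_sum x₀ x hcoord y)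
      _ = ∑ t : Finset (Fin d), ENNReal.ofReal (Real.exp ⟪x₀ + sgn t, y⟫) :=
          ENNReal.ofReal_sum_of_nonneg fun t _ => (Real.exp_pos _).le
  · rw [lintegral_finset_sum _ (fun t _ => meas_exp_inner _)]
    exact (ENNReal.sum_lt_top.2 fun t _ => hfin (x₀ + sgn t)).ne
  · apply ae_of_all
    intro y
    exact (ENNReal.continuous_ofReal.comp (Real.continuous_exp.comp
      (Continuous.inner continuous_id continuous_const))).continuousAt

lemma laplace_zero {d : ℕ} (μ : Measure (EuclideanSpace ℝ (Fin d))) [IsProbabilityMeasure μ] :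
    laplace μ 0 = 1 := by
  simp [laplace]

lemma laplace_ge {d : ℕ} (μ : Measure (EuclideanSpace ℝ (Fin d)))
    (z : EuclideanSpace ℝ (Fin d)) (c : ℝ) (A : Set (EuclideanSpace ℝ (Fin d)))
    (hA : ∀ y ∈ A, c ≤ ⟪z, y⟫) :
    ENNReal.ofReal (Real.exp c) * μ A ≤ laplace μ z := by
  calc ENNReal.ofReal (Real.exp c) * μ A
      = ∫⁻ _ in A, ENNReal.ofReal (Real.exp c) ∂μ := (setLIntegral_const _ _).symm
    _ ≤ ∫⁻ y in A, ENNReal.ofReal (Real.exp ⟪z, y⟫) ∂μ := by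
        apply setLIntegral_mono_ae (meas_exp_inner z).aemeasurable
        exact ae_of_all _ fun y hy =>
          ENNReal.ofReal_le_ofReal (Real.exp_le_exp.2 (hA y hy))
    _ ≤ laplace μ z := setLIntegral_le_lintegral _ _

lemma inner_meas {d : ℕ} (u : EuclideanSpace ℝ (Fin d)) :
    Measurable (fun y : EuclideanSpace ℝ (Fin d) => ⟪u, y⟫) :=
  (Continuous.inner continuous_const continuous_id).measurable

lemma forward_dir {d : ℕ} (K : Set (EuclideanSpace ℝ (Fin d)))
    (μ : Measure (EuclideanSpace ℝ (Fin d))) [IsProbabilityMeasure μ]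
    (hH1 : ∀ u : EuclideanSpace ℝ (Fin d), u ≠ 0 → μ {y | ⟪u, y⟫ = 0} < 1)
    (hfin : ∀ x : EuclideanSpace ℝ (Fin d), laplace μ x < ⊤)
    (h : ∃ xstar ∈ dualCone K, ∃ V : Set (EuclideanSpace ℝ (Fin d)),
        IsOpen V ∧ xstar ∈ V ∧ (∀ z ∈ V, laplace μ z < ⊤) ∧
        ∀ z ∈ dualCone K ∩ V, laplace μ xstar ≤ laplace μ z) :
    ∀ u ∈ dualCone K, u ≠ 0 → μ {y | ⟪u, y⟫ ≤ 0} < 1 := by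
  obtain ⟨xstar, hxK, V, hVopen, hxV, -, hmin⟩ := h
  intro u huK hu0
  by_contra h1
  have hle : μ {y | ⟪u, y⟫ ≤ 0} = 1 :=
    le_antisymm prob_le_one (not_lt.1 h1)
  have hmeas_le : MeasurableSet {y : EuclideanSpace ℝ (Fin d) | ⟪u, y⟫ ≤ 0} :=
    measurableSet_le (inner_meas u) measurable_const
  -- a.e. y, ⟪u,y⟫ ≤ 0
  have hae : ∀ᵐ y ∂μ, ⟪u, y⟫ ≤ 0 := by
    have hcompl : μ ({y | ⟪u, y⟫ ≤ 0}ᶜ) = 0 := by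
      rw [measure_compl hmeas_le (measure_ne_top μ _), measure_univ, hle, tsub_self]
    rw [ae_iff, ← Set.compl_setOf]
    exact hcompl
  -- μ {⟪u,y⟫ < 0} > 0
  have hlt : 0 < μ {y | ⟪u, y⟫ < 0} := by
    by_contra hc
    push_neg at hc
    have hc0 : μ {y | ⟪u, y⟫ < 0} = 0 := le_antisymm hc (zero_le)
    have : μ {y | ⟪u, y⟫ ≤ 0} ≤ μ {y | ⟪u, y⟫ < 0} + μ {y | ⟪u, y⟫ = 0} := by
      refine le_trans (measure_mono ?_) (measure_union_le _ _)
      intro y hy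
      simp only [Set.mem_setOf_eq] at hy
      rcases lt_or_eq_of_le hy with h | h
      · exact Or.inl h
      · exact Or.inr h
    rw [hle, hc0, zero_add] at this
    exact absurd (hH1 u hu0) (not_lt.2 this)
  -- ∃ c > 0 with μ {⟪u,y⟫ ≤ -c} > 0
  obtain ⟨c, hcpos, hBpos⟩ : ∃ c : ℝ, 0 < c ∧ 0 < μ {y | ⟪u, y⟫ ≤ -c} := by
    by_contra hc
    push_neg at hc
    have hnull : ∀ n : ℕ, μ {y | ⟪u, y⟫ ≤ -(1 / (n + 1))} = 0 := fun n =>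
      le_antisymm (hc _ (by positivity)) (zero_le)
    have : μ {y | ⟪u, y⟫ < 0} ≤ μ (⋃ n : ℕ, {y | ⟪u, y⟫ ≤ -(1 / (n + 1) : ℝ)}) := by
      apply measure_mono
      intro y hy
      simp only [Set.mem_setOf_eq] at hy
      obtain ⟨n, hn⟩ := exists_nat_one_div_lt (neg_pos.2 hy)
      exact Set.mem_iUnion.2 ⟨n, by simp only [Set.mem_setOf_eq]; linarith⟩
    rw [measure_iUnion_null hnull] at this
    exact absurd hlt (not_lt.2 this)
  -- choose t and z
  obtain ⟨r, hrpos, hball⟩ := Metric.isOpen_iff.1 hVopen xstar hxV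
  have hunorm : 0 < ‖u‖ := norm_pos_iff.2 hu0
  set t : ℝ := r / (2 * ‖u‖) with ht
  have htpos : 0 < t := by positivity
  set z := xstar + t • u with hz
  have hzV : z ∈ V := by
    apply hball
    rw [Metric.mem_ball, dist_eq_norm]
    have : z - xstar = t • u := by rw [hz]; abel
    rw [this, norm_smul, Real.norm_eq_abs, abs_of_pos htpos]
    have h2 : t * ‖u‖ = r / 2 := by
      rw [ht]; field_simp
    rw [h2]; linarith
  have hzK : z ∈ dualCone K := by
    intro x hx
    rw [hz, inner_add_right, real_inner_smul_right]
    have h1 := hxK x hx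
    have h2 := huK x hx
    nlinarith
  set B := {y : EuclideanSpace ℝ (Fin d) | ⟪u, y⟫ ≤ -c} with hBdef
  have hBmeas : MeasurableSet B := measurableSet_le (inner_meas u) measurable_const
  have key : ∀ y, ⟪z, y⟫ = ⟪xstar, y⟫ + t * ⟪u, y⟫ := fun y => by
    rw [hz, inner_add_left, real_inner_smul_left]
  have hIB_lt : ∫⁻ y in B, ENNReal.ofReal (Real.exp ⟪xstar, y⟫) ∂μ < ⊤ :=
    lt_of_le_of_lt (setLIntegral_le_lintegral _ _) (hfin xstar)
  have hIB_pos : 0 < ∫⁻ y in B, ENNReal.ofReal (Real.exp ⟪xstar, y⟫) ∂μ := by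
    rw [setLIntegral_pos_iff (meas_exp_inner xstar)]
    have hsupp : Function.support
        (fun y : EuclideanSpace ℝ (Fin d) => ENNReal.ofReal (Real.exp ⟪xstar, y⟫)) =
        Set.univ := by
      ext y
      simp [Function.mem_support, ENNReal.ofReal_pos, Real.exp_pos]
    rw [hsupp, Set.univ_inter]
    exact hBpos
  have hfrac : ENNReal.ofReal (Real.exp (-(t * c))) < 1 := by
    rw [ENNReal.ofReal_lt_one]
    apply Real.exp_lt_one_iff.2
    nlinarith
  have hsplitB : ∫⁻ y in B, ENNReal.ofReal (Real.exp ⟪z, y⟫) ∂μ <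
      ∫⁻ y in B, ENNReal.ofReal (Real.exp ⟪xstar, y⟫) ∂μ := by
    have step1 : ∫⁻ y in B, ENNReal.ofReal (Real.exp ⟪z, y⟫) ∂μ ≤
        ∫⁻ y in B, ENNReal.ofReal (Real.exp (-(t * c))) *
          ENNReal.ofReal (Real.exp ⟪xstar, y⟫) ∂μ := by
      apply setLIntegral_mono_ae ((meas_exp_inner xstar).const_mul _).aemeasurable
      apply ae_of_all
      intro y hy
      simp only [hBdef, Set.mem_setOf_eq] at hy
      rw [key y, ← ENNReal.ofReal_mul (Real.exp_pos _).le, ← Real.exp_add]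
      apply ENNReal.ofReal_le_ofReal
      apply Real.exp_le_exp.2
      nlinarith
    have step2 : ∫⁻ y in B, ENNReal.ofReal (Real.exp (-(t * c))) *
        ENNReal.ofReal (Real.exp ⟪xstar, y⟫) ∂μ =
        ENNReal.ofReal (Real.exp (-(t * c))) *
          ∫⁻ y in B, ENNReal.ofReal (Real.exp ⟪xstar, y⟫) ∂μ :=
      lintegral_const_mul _ (meas_exp_inner xstar)
    have step3 := (ENNReal.mul_lt_mul_iff_left hIB_pos.ne' hIB_lt.ne).2 hfrac
    rw [one_mul] at step3
    calc ∫⁻ y in B, ENNReal.ofReal (Real.exp ⟪z, y⟫) ∂μ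
        ≤ _ := step1
      _ = _ := step2
      _ < _ := step3
  have hsplitBc : ∫⁻ y in Bᶜ, ENNReal.ofReal (Real.exp ⟪z, y⟫) ∂μ ≤
      ∫⁻ y in Bᶜ, ENNReal.ofReal (Real.exp ⟪xstar, y⟫) ∂μ := by
    apply setLIntegral_mono_ae (meas_exp_inner xstar).aemeasurable
    filter_upwards [hae] with y hy _
    rw [key y]
    apply ENNReal.ofReal_le_ofReal
    apply Real.exp_le_exp.2
    nlinarith
  have hlt2 : laplace μ z < laplace μ xstar := by
    show (∫⁻ y, ENNReal.ofReal (Real.exp ⟪z, y⟫) ∂μ) <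
      ∫⁻ y, ENNReal.ofReal (Real.exp ⟪xstar, y⟫) ∂μ
    rw [← lintegral_add_compl (fun y => ENNReal.ofReal (Real.exp ⟪z, y⟫)) hBmeas,
      ← lintegral_add_compl (fun y => ENNReal.ofReal (Real.exp ⟪xstar, y⟫)) hBmeas]
    apply ENNReal.add_lt_add_of_lt_of_le _ hsplitB hsplitBc
    exact (lt_of_le_of_lt (setLIntegral_le_lintegral _ _) (hfin z)).ne
  exact absurd (hmin z ⟨hzK, hzV⟩) (not_le.2 hlt2)

lemma local_bound {d : ℕ} (μ : Measure (EuclideanSpace ℝ (Fin d))) [IsProbabilityMeasure μ]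
    (u : EuclideanSpace ℝ (Fin d))
    (hu : μ {y | ⟪u, y⟫ ≤ 0} < 1) :
    ∃ r > 0, ∃ ε > 0, ∃ δ : ℝ≥0∞, 0 < δ ∧ δ ≤ 1 ∧
      ∀ v ∈ Metric.ball u r, δ ≤ μ {y | ε ≤ ⟪v, y⟫} := by
  -- μ {⟪u,y⟫ > 0} > 0
  have hpos : 0 < μ {y | 0 < ⟪u, y⟫} := by
    by_contra hc
    push_neg at hc
    have hc0 : μ {y | 0 < ⟪u, y⟫} = 0 := le_antisymm hc (zero_le)
    have : (1 : ℝ≥0∞) ≤ μ {y | ⟪u, y⟫ ≤ 0} := by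
      calc (1 : ℝ≥0∞) = μ Set.univ := (measure_univ).symm
        _ ≤ μ ({y | ⟪u, y⟫ ≤ 0} ∪ {y | 0 < ⟪u, y⟫}) := by
            apply measure_mono; intro y _; exact le_or_gt ⟪u, y⟫ 0
        _ ≤ μ {y | ⟪u, y⟫ ≤ 0} + μ {y | 0 < ⟪u, y⟫} := measure_union_le _ _
        _ = μ {y | ⟪u, y⟫ ≤ 0} := by rw [hc0, add_zero]
    exact absurd hu (not_lt.2 this)
  -- find n with positive measure of truncated set
  obtain ⟨n, hn⟩ : ∃ n : ℕ, 0 < μ {y | 1 / (n + 1) ≤ ⟪u, y⟫ ∧ ‖y‖ ≤ n + 1} := by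
    by_contra hc
    push_neg at hc
    have hnull : ∀ n : ℕ, μ {y | 1 / (n + 1) ≤ ⟪u, y⟫ ∧ ‖y‖ ≤ n + 1} = 0 := fun n =>
      le_antisymm (hc n) (zero_le)
    have : μ {y | 0 < ⟪u, y⟫} ≤
        μ (⋃ n : ℕ, {y | 1 / (n + 1) ≤ ⟪u, y⟫ ∧ ‖y‖ ≤ n + 1}) := by
      apply measure_mono
      intro y hy
      simp only [Set.mem_setOf_eq] at hy
      obtain ⟨m, hm⟩ := exists_nat_one_div_lt hy
      obtain ⟨k, hk⟩ := exists_nat_ge ‖y‖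
      refine Set.mem_iUnion.2 ⟨max m k, ?_⟩
      constructor
      · have h1 : (1 : ℝ) / (max m k + 1) ≤ 1 / (m + 1) := by
          apply one_div_le_one_div_of_le (by positivity)
          have : (m : ℝ) ≤ max m k := by exact_mod_cast le_max_left m k
          linarith
        linarith
      · have : (k : ℝ) ≤ max m k := by exact_mod_cast le_max_right m k
        linarith
    rw [measure_iUnion_null hnull] at this
    exact absurd hpos (not_lt.2 this)
  set ε : ℝ := 1 / (2 * (n + 1)) with hε
  have hεpos : 0 < ε := by positivity
  set r : ℝ := 1 / (2 * (n + 1) ^ 2) with hr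
  have hrpos : 0 < r := by positivity
  refine ⟨r, hrpos, ε, hεpos, μ {y | 1 / (n + 1) ≤ ⟪u, y⟫ ∧ ‖y‖ ≤ n + 1}, hn,
    prob_le_one, ?_⟩
  intro v hv
  apply measure_mono
  intro y hy
  simp only [Set.mem_setOf_eq] at hy ⊢
  obtain ⟨hy1, hy2⟩ := hy
  rw [Metric.mem_ball, dist_eq_norm] at hv
  have hinner : ⟪v, y⟫ = ⟪u, y⟫ + ⟪v - u, y⟫ := by
    rw [← inner_add_left]; congr 1; abel
  have hbound : |⟪v - u, y⟫| ≤ ‖v - u‖ * ‖y‖ := abs_real_inner_le_norm _ _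
  have h3 : ‖v - u‖ * ‖y‖ ≤ r * (n + 1) := by
    apply mul_le_mul hv.le hy2 (norm_nonneg _) hrpos.le
  have h4 : r * (n + 1) = 1 / (2 * (n + 1)) := by
    rw [hr]; field_simp
  rw [hinner, hε]
  have := abs_le.1 hbound
  have hn1 : (1 : ℝ) / (n + 1) = 2 * (1 / (2 * (n + 1))) := by field_simp
  linarith [this.1, h3, hy1]

lemma dualCone_isClosed {d : ℕ} (K : Set (EuclideanSpace ℝ (Fin d))) :
    IsClosed (dualCone K) := by
  have : dualCone K = ⋂ x ∈ K, {z : EuclideanSpace ℝ (Fin d) | 0 ≤ ⟪x, z⟫} := by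
    ext z; simp [dualCone, Set.mem_iInter]
  rw [this]
  exact isClosed_biInter fun x _ =>
    isClosed_le continuous_const (Continuous.inner continuous_const continuous_id)

lemma zero_mem_dualCone {d : ℕ} (K : Set (EuclideanSpace ℝ (Fin d))) : 0 ∈ dualCone K :=
  fun x _ => by rw [inner_zero_right]

lemma uniform_bound {d : ℕ} (K : Set (EuclideanSpace ℝ (Fin d)))
    (μ : Measure (EuclideanSpace ℝ (Fin d))) [IsProbabilityMeasure μ]
    (h : ∀ u ∈ dualCone K, u ≠ 0 → μ {y | ⟪u, y⟫ ≤ 0} < 1) :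
    ∃ ε > 0, ∃ δ : ℝ≥0∞, 0 < δ ∧ δ ≤ 1 ∧
      ∀ u ∈ dualCone K ∩ Metric.sphere 0 1, δ ≤ μ {y | ε ≤ ⟪u, y⟫} := by
  set S := dualCone K ∩ Metric.sphere (0 : EuclideanSpace ℝ (Fin d)) 1 with hS
  have hScompact : IsCompact S :=
    (isCompact_sphere 0 1).inter_left (dualCone_isClosed K)
  have hdata : ∀ u : EuclideanSpace ℝ (Fin d), u ∈ S →
      ∃ r > 0, ∃ ε > 0, ∃ δ : ℝ≥0∞, 0 < δ ∧ δ ≤ 1 ∧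
        ∀ v ∈ Metric.ball u r, δ ≤ μ {y | ε ≤ ⟪v, y⟫} := by
    intro u hu
    have hu0 : u ≠ 0 := by
      intro h0
      have := hu.2
      rw [h0] at this
      simp at this
    exact local_bound μ u (h u hu.1 hu0)
  choose! rf hrf εf hεf δf hδf hδf1 hball using hdata
  obtain ⟨t, hts, hcover⟩ := hScompact.elim_nhds_subcover (fun u => Metric.ball u (rf u))
    (fun u hu => Metric.ball_mem_nhds u (hrf u hu))
  rcases t.eq_empty_or_nonempty with rfl | htne
  · refine ⟨1, one_pos, 1, one_pos, le_refl _, ?_⟩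
    intro u hu
    have := hcover hu
    simp at this
  · refine ⟨t.inf' htne εf, ?_, t.inf' htne δf, ?_, ?_, ?_⟩
    · rw [gt_iff_lt, Finset.lt_inf'_iff]
      exact fun u hu => hεf u (hts u hu)
    · rw [Finset.lt_inf'_iff]
      exact fun u hu => hδf u (hts u hu)
    · obtain ⟨u, hu⟩ := htne
      exact le_trans (Finset.inf'_le _ hu) (hδf1 u (hts u hu))
    · intro u hu
      obtain ⟨v, hvt, hv⟩ := Set.mem_iUnion₂.1 (hcover hu)
      calc t.inf' htne δf ≤ δf v := Finset.inf'_le _ hvt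
        _ ≤ μ {y | εf v ≤ ⟪u, y⟫} := hball v (hts v hvt) u hv
        _ ≤ μ {y | t.inf' htne εf ≤ ⟪u, y⟫} := by
            apply measure_mono
            intro y hy
            simp only [Set.mem_setOf_eq] at hy ⊢
            exact le_trans (Finset.inf'_le _ hvt) hy

lemma backward_dir {d : ℕ} (K : Set (EuclideanSpace ℝ (Fin d)))
    (μ : Measure (EuclideanSpace ℝ (Fin d))) [IsProbabilityMeasure μ]
    (hfin : ∀ x : EuclideanSpace ℝ (Fin d), laplace μ x < ⊤)
    (h : ∀ u ∈ dualCone K, u ≠ 0 → μ {y | ⟪u, y⟫ ≤ 0} < 1) :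
    ∃ xstar ∈ dualCone K, ∃ V : Set (EuclideanSpace ℝ (Fin d)),
        IsOpen V ∧ xstar ∈ V ∧ (∀ z ∈ V, laplace μ z < ⊤) ∧
        ∀ z ∈ dualCone K ∩ V, laplace μ xstar ≤ laplace μ z := by
  obtain ⟨ε, hε, δ, hδ0, hδ1, hbound⟩ := uniform_bound K μ h
  have hδtop : δ ≠ ⊤ := (lt_of_le_of_lt hδ1 ENNReal.one_lt_top).ne
  have hgrow : ∀ z ∈ dualCone K, z ≠ 0 →
      ENNReal.ofReal (Real.exp (‖z‖ * ε)) * δ ≤ laplace μ z := by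
    intro z hz hz0
    have hznorm : 0 < ‖z‖ := norm_pos_iff.2 hz0
    set u : EuclideanSpace ℝ (Fin d) := ‖z‖⁻¹ • z with hu
    have huS : u ∈ dualCone K ∩ Metric.sphere 0 1 := by
      constructor
      · intro x hx
        rw [hu, real_inner_smul_right]
        exact mul_nonneg (inv_nonneg.2 hznorm.le) (hz x hx)
      · simp only [Metric.mem_sphere, dist_zero_right, hu, norm_smul, norm_inv,
          norm_norm]
        field_simp
    have hzu : z = ‖z‖ • u := by
      rw [hu, smul_inv_smul₀ hznorm.ne']
    have hsub : {y : EuclideanSpace ℝ (Fin d) | ε ≤ ⟪u, y⟫} ⊆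
        {y | ‖z‖ * ε ≤ ⟪z, y⟫} := by
      intro y hy
      simp only [Set.mem_setOf_eq] at hy ⊢
      calc ‖z‖ * ε ≤ ‖z‖ * ⟪u, y⟫ := by gcongr
        _ = ‖z‖ * (‖z‖⁻¹ * ⟪z, y⟫) := by rw [hu, real_inner_smul_left]
        _ = ⟪z, y⟫ := by field_simp
    calc ENNReal.ofReal (Real.exp (‖z‖ * ε)) * δ
        ≤ ENNReal.ofReal (Real.exp (‖z‖ * ε)) * μ {y | ‖z‖ * ε ≤ ⟪z, y⟫} := by
          gcongr
          exact le_trans (hbound u huS) (measure_mono hsub)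
      _ ≤ laplace μ z := laplace_ge μ z _ _ (fun y hy => hy)
  set c0 : ℝ := 1 / δ.toReal with hc0def
  have hδt : 0 < δ.toReal := ENNReal.toReal_pos hδ0.ne' hδtop
  have hc0 : 0 < c0 := by positivity
  set R : ℝ := max 1 ((Real.log c0 + 1) / ε) with hRdef
  have hR1 : (1 : ℝ) ≤ R := le_max_left _ _
  have hRpos : 0 < R := lt_of_lt_of_le one_pos hR1
  have hRε : Real.log c0 < R * ε := by
    have h2 := le_max_right 1 ((Real.log c0 + 1) / ε)
    rw [div_le_iff₀ hε] at h2
    linarith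
  have hgt : ∀ z ∈ dualCone K, R < ‖z‖ → 1 < laplace μ z := by
    intro z hz hRz
    have hz0 : z ≠ 0 := by
      intro h0
      rw [h0, norm_zero] at hRz
      linarith
    have h1 : (1 : ℝ≥0∞) = ENNReal.ofReal c0 * δ := by
      nth_rewrite 1 [← ENNReal.ofReal_one]
      rw [← ENNReal.ofReal_toReal hδtop, ← ENNReal.ofReal_mul hc0.le]
      congr 1
      rw [hc0def]
      field_simp
    rw [h1]
    have hstep : ENNReal.ofReal c0 * δ < ENNReal.ofReal (Real.exp (‖z‖ * ε)) * δ := by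
      apply (ENNReal.mul_lt_mul_iff_left hδ0.ne' hδtop).2
      apply (ENNReal.ofReal_lt_ofReal_iff (Real.exp_pos _)).2
      nth_rewrite 1 [← Real.exp_log hc0]
      apply Real.exp_lt_exp.2
      nlinarith
    exact lt_of_lt_of_le hstep (hgrow z hz hz0)
  set C := dualCone K ∩ Metric.closedBall (0 : EuclideanSpace ℝ (Fin d)) R with hC
  have hCcompact : IsCompact C := (isCompact_closedBall 0 R).inter_left (dualCone_isClosed K)
  have hC0 : (0 : EuclideanSpace ℝ (Fin d)) ∈ C :=
    ⟨zero_mem_dualCone K, Metric.mem_closedBall_self hRpos.le⟩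
  obtain ⟨xstar, hxC, hxmin⟩ := hCcompact.exists_isMinOn ⟨0, hC0⟩
    (laplace_continuous μ hfin).continuousOn
  refine ⟨xstar, hxC.1, Set.univ, isOpen_univ, Set.mem_univ _, fun z _ => hfin z, ?_⟩
  rintro z ⟨hzK, -⟩
  by_cases hzR : ‖z‖ ≤ R
  · exact hxmin ⟨hzK, by simpa [Metric.mem_closedBall, dist_zero_right] using hzR⟩
  · push_neg at hzR
    calc laplace μ xstar ≤ laplace μ 0 := hxmin hC0
      _ = 1 := laplace_zero μ
      _ ≤ laplace μ z := (hgt z hzK hzR).le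

/-- **Geometric interpretation of (H2)**: for a measure `μ` satisfying (H1) and with all
exponential moments, condition (H2) (existence of a local minimum point of `L_μ` on `K*`)
holds if and only if the support of `μ` is not contained in any half-space
`u⁻ = {y : ⟨u,y⟩ ≤ 0}` with `u ∈ K* \ {0}` (equivalently, `μ(u⁻) < 1` for all such `u`). -/
theorem H2_iff_support_not_in_halfspace
    {d : ℕ} (hd : 1 ≤ d)
    (K : Set (EuclideanSpace ℝ (Fin d)))
    (hKclosed : IsClosed K) (hKconvex : Convex ℝ K)
    (hKcone : ∀ c : ℝ, 0 ≤ c → ∀ x ∈ K, c • x ∈ K)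
    (hKint : (interior K).Nonempty)
    (μ : Measure (EuclideanSpace ℝ (Fin d))) [IsProbabilityMeasure μ]
    -- (H1)
    (hH1 : ∀ u : EuclideanSpace ℝ (Fin d), u ≠ 0 → μ {y | ⟪u, y⟫ = 0} < 1)
    -- all exponential moments
    (hfin : ∀ x : EuclideanSpace ℝ (Fin d), laplace μ x < ⊤) :
    (∃ xstar ∈ dualCone K, ∃ V : Set (EuclideanSpace ℝ (Fin d)),
        IsOpen V ∧ xstar ∈ V ∧ (∀ z ∈ V, laplace μ z < ⊤) ∧
        ∀ z ∈ dualCone K ∩ V, laplace μ xstar ≤ laplace μ z) ↔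
      ∀ u ∈ dualCone K, u ≠ 0 → μ {y | ⟪u, y⟫ ≤ 0} < 1 := by
  exact ⟨fun h => forward_dir K μ hH1 hfin h, fun h => backward_dir K μ hfin h⟩
end

section
/- Let C ⊆ ℝ^d be a closed convex cone and let μ be a probability measure on ℝ^d with L_μ(x) < ∞ for all x ∈ C. If lim_{t→∞} L_μ(tu) = ∞ for every unit vector u ∈ C, then L_μ attains a global minimum on C, i.e., there exists x₀ ∈ C with L_μ(x₀) = inf_{x ∈ C} L_μ(x). -/
open MeasureTheory ProbabilityTheory Filter
open scoped ENNReal RealInnerProductSpace Topology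

private lemma laplace_meas {d : ℕ} (z : EuclideanSpace ℝ (Fin d)) :
    Measurable fun y : EuclideanSpace ℝ (Fin d) => ENNReal.ofReal (Real.exp ⟪z, y⟫) :=
  ENNReal.measurable_ofReal.comp
    ((Real.continuous_exp.comp (continuous_const.inner continuous_id)).measurable)

private lemma laplace_le_liminf {d : ℕ} (μ : Measure (EuclideanSpace ℝ (Fin d)))
    {z : ℕ → EuclideanSpace ℝ (Fin d)} {z₀ : EuclideanSpace ℝ (Fin d)}
    (hz : Tendsto z atTop (𝓝 z₀)) :
    laplace μ z₀ ≤ liminf (fun n => laplace μ (z n)) atTop := by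
  have hpt : ∀ y, Tendsto (fun n => ENNReal.ofReal (Real.exp ⟪z n, y⟫)) atTop
      (𝓝 (ENNReal.ofReal (Real.exp ⟪z₀, y⟫))) := fun y =>
    (ENNReal.continuous_ofReal.tendsto _).comp
      ((Real.continuous_exp.tendsto _).comp (hz.inner tendsto_const_nhds))
  calc laplace μ z₀
      = ∫⁻ y, liminf (fun n => ENNReal.ofReal (Real.exp ⟪z n, y⟫)) atTop ∂μ :=
        lintegral_congr fun y => ((hpt y).liminf_eq).symm
    _ ≤ liminf (fun n => laplace μ (z n)) atTop :=
        lintegral_liminf_le fun n => laplace_meas _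

/-- **Coercivity implies existence of a global minimum**: if `L_μ` is finite on the closed
convex cone `C` and `L_μ(tu) → ∞` as `t → ∞` for every unit vector `u ∈ C`, then `L_μ`
attains its infimum on `C`. -/
theorem laplace_attains_min_of_coercive
    {d : ℕ} (hd : 1 ≤ d)
    (C : Set (EuclideanSpace ℝ (Fin d)))
    (hCclosed : IsClosed C) (hCconvex : Convex ℝ C)
    (hCcone : ∀ c : ℝ, 0 ≤ c → ∀ x ∈ C, c • x ∈ C)
    (hCne : C.Nonempty)
    (μ : Measure (EuclideanSpace ℝ (Fin d))) [IsProbabilityMeasure μ]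
    (hfin : ∀ x ∈ C, laplace μ x < ⊤)
    (hcoercive : ∀ u ∈ C, ‖u‖ = 1 →
      Tendsto (fun t : ℝ => laplace μ (t • u)) atTop (𝓝 ⊤)) :
    ∃ x₀ ∈ C, laplace μ x₀ = ⨅ x ∈ C, laplace μ x := by
  classical
  let E := EuclideanSpace ℝ (Fin d)
  set m := ⨅ x ∈ C, laplace μ x with hm
  obtain ⟨w, hw⟩ := hCne
  have h0C : (0 : E) ∈ C := by simpa using hCcone 0 le_rfl w hw
  have hmle : ∀ x ∈ C, m ≤ laplace μ x := fun x hx => biInf_le _ hx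
  have hmtop : m < ⊤ := (hmle 0 h0C).trans_lt (hfin 0 h0C)
  -- minimizing sequence
  have hexists : ∀ n : ℕ, ∃ x, x ∈ C ∧ laplace μ x < m + ((n : ℝ≥0∞) + 1)⁻¹ := by
    intro n
    have hlt : m < m + ((n : ℝ≥0∞) + 1)⁻¹ :=
      ENNReal.lt_add_right hmtop.ne (by simp)
    rw [hm] at hlt
    obtain ⟨x, hx⟩ := iInf_lt_iff.mp hlt
    obtain ⟨hxC, hxlt⟩ := iInf_lt_iff.mp hx
    exact ⟨x, hxC, hxlt⟩
  choose xs hxsC hxslt using hexists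
  have htend : Tendsto (fun n => laplace μ (xs n)) atTop (𝓝 m) := by
    have h0 : Tendsto (fun n : ℕ => ((n : ℝ≥0∞) + 1)⁻¹) atTop (𝓝 0) := by
      have := ENNReal.tendsto_inv_nat_nhds_zero.comp (tendsto_add_atTop_nat 1)
      simpa [Function.comp_def, Nat.cast_add] using this
    have h1 : Tendsto (fun n : ℕ => m + ((n : ℝ≥0∞) + 1)⁻¹) atTop (𝓝 m) := by
      simpa using (tendsto_const_nhds (x := m) (f := atTop (α := ℕ))).add h0
    exact tendsto_of_tendsto_of_tendsto_of_le_of_le tendsto_const_nhds h1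
      (fun n => hmle _ (hxsC n)) (fun n => (hxslt n).le)
  by_cases hb : ∃ b : ℝ, ∃ᶠ n in atTop, ‖xs n‖ < b
  · -- bounded subsequence: extract convergent subsequence, use lower semicontinuity
    obtain ⟨b, hb⟩ := hb
    obtain ⟨φ, hφmono, hφ⟩ := extraction_of_frequently_atTop hb
    have hmem : ∀ n, xs (φ n) ∈ Metric.closedBall (0 : E) b := fun n => by
      simpa [Metric.mem_closedBall] using (hφ n).le
    obtain ⟨x₀, _, ψ, hψmono, hψtend⟩ :=
      (isCompact_closedBall (0 : E) b).tendsto_subseq hmem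
    have hx₀C : x₀ ∈ C :=
      hCclosed.mem_of_tendsto hψtend (Eventually.of_forall fun n => hxsC _)
    refine ⟨x₀, hx₀C, le_antisymm ?_ (hmle _ hx₀C)⟩
    have hlsc := laplace_le_liminf μ hψtend
    have hsub : Tendsto (fun n => laplace μ (((fun k => xs (φ k)) ∘ ψ) n)) atTop (𝓝 m) :=
      htend.comp ((hφmono.comp hψmono).tendsto_atTop)
    rwa [hsub.liminf_eq] at hlsc
  · -- unbounded: norms tend to infinity; derive a contradiction
    exfalso
    have hnorm : Tendsto (fun n => ‖xs n‖) atTop atTop := by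
      by_contra h
      exact hb (by
        simp only [tendsto_atTop, not_forall, not_eventually, not_le,
          frequently_atTop] at h ⊢
        exact h)
    set u : ℕ → E := fun n =>
      if h : xs n = 0 then EuclideanSpace.single (⟨0, hd⟩ : Fin d) (1 : ℝ)
      else ‖xs n‖⁻¹ • xs n with hu
    have hu_sphere : ∀ n, u n ∈ Metric.sphere (0 : E) 1 := by
      intro n
      by_cases h : xs n = 0
      · rw [hu]; simp only [h, dif_pos]
        rw [Metric.mem_sphere, dist_zero_right, EuclideanSpace.norm_single]; norm_num
      · have hne : ‖xs n‖ ≠ 0 := norm_ne_zero_iff.mpr h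
        simp [hu, h, norm_smul, abs_of_nonneg (inv_nonneg.mpr (norm_nonneg _)),
          inv_mul_cancel₀ hne]
    obtain ⟨u₀, hu₀mem, ψ, hψmono, hψtend⟩ :=
      (isCompact_sphere (0 : E) 1).tendsto_subseq hu_sphere
    have hnorm' : Tendsto (fun n => ‖xs (ψ n)‖) atTop atTop :=
      hnorm.comp hψmono.tendsto_atTop
    have hev : ∀ᶠ n in atTop, xs (ψ n) ≠ 0 :=
      (hnorm'.eventually_gt_atTop 0).mono fun n hn h0 => by simp [h0] at hn
    have hu₀C : u₀ ∈ C := by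
      apply hCclosed.mem_of_tendsto hψtend
      filter_upwards [hev] with n hn
      have : u (ψ n) = ‖xs (ψ n)‖⁻¹ • xs (ψ n) := dif_neg hn
      simp only [Function.comp_apply, this]
      exact hCcone _ (inv_nonneg.mpr (norm_nonneg _)) _ (hxsC _)
    have hu₀norm : ‖u₀‖ = 1 := by simpa using hu₀mem
    set S := {y : E | 0 < ⟪u₀, y⟫} with hSdef
    have hSmeas : MeasurableSet S :=
      measurableSet_lt measurable_const (continuous_const.inner continuous_id).measurable
    by_cases hS : μ S = 0
    · -- a.e. ⟪u₀, y⟫ ≤ 0 contradicts coercivity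
      have hae : ∀ᵐ y ∂μ, ⟪u₀, y⟫ ≤ 0 := by
        rw [ae_iff]
        convert hS using 2
        ext y
        simp [hSdef, not_le]
      have hle : ∀ t : ℝ, 0 ≤ t → laplace μ (t • u₀) ≤ 1 := by
        intro t ht
        calc laplace μ (t • u₀) ≤ ∫⁻ _, 1 ∂μ := by
              apply lintegral_mono_ae
              filter_upwards [hae] with y hy
              have h1 : ⟪t • u₀, y⟫ ≤ 0 := by
                rw [real_inner_smul_left]
                exact mul_nonpos_iff.mpr (Or.inl ⟨ht, hy⟩)
              simpa [ENNReal.ofReal_le_one] using Real.exp_le_one_iff.mpr h1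
          _ = 1 := by simp
      have hco := hcoercive u₀ hu₀C hu₀norm
      have h2 : ∀ᶠ t : ℝ in atTop, (1 : ℝ≥0∞) < laplace μ (t • u₀) :=
        hco.eventually (eventually_mem_set.mpr (Ioi_mem_nhds (by simp)))
      obtain ⟨t, ht1, ht0⟩ := (h2.and (eventually_ge_atTop (0 : ℝ))).exists
      exact absurd (hle t ht0) (not_le.mpr ht1)
    · -- μ S > 0: liminf along the subsequence is ⊤, contradicting m < ⊤
      have hlim : ∀ y ∈ S, Tendsto (fun n => ENNReal.ofReal (Real.exp ⟪xs (ψ n), y⟫))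
          atTop (𝓝 ⊤) := by
        intro y hy
        have hpos : (0 : ℝ) < ⟪u₀, y⟫ := hy
        have hinner : Tendsto (fun n => ⟪u (ψ n), y⟫) atTop (𝓝 ⟪u₀, y⟫) :=
          hψtend.inner tendsto_const_nhds
        have hhalf : ∀ᶠ n in atTop, ⟪u₀, y⟫ / 2 < ⟪u (ψ n), y⟫ :=
          hinner.eventually (eventually_mem_set.mpr (Ioi_mem_nhds (by linarith)))
        have hmul : Tendsto (fun n => ‖xs (ψ n)‖ * ⟪u (ψ n), y⟫) atTop atTop := by
          apply tendsto_atTop_mono' _ _ (hnorm'.atTop_mul_const (by linarith : (0:ℝ) < ⟪u₀, y⟫ / 2))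
          filter_upwards [hhalf] with n hn
          exact mul_le_mul_of_nonneg_left hn.le (norm_nonneg _)
        have hinner2 : Tendsto (fun n => ⟪xs (ψ n), y⟫) atTop atTop := by
          apply hmul.congr'
          filter_upwards [hev] with n hn
          have hne : ‖xs (ψ n)‖ ≠ 0 := norm_ne_zero_iff.mpr hn
          have : u (ψ n) = ‖xs (ψ n)‖⁻¹ • xs (ψ n) := dif_neg hn
          rw [this, real_inner_smul_left, ← mul_assoc, mul_inv_cancel₀ hne, one_mul]
        exact ENNReal.tendsto_ofReal_atTop.comp (Real.tendsto_exp_atTop.comp hinner2)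
      have hge : (⊤ : ℝ≥0∞) ≤ liminf (fun n => laplace μ (xs (ψ n))) atTop := by
        have h1 : ∫⁻ y, liminf (fun n => ENNReal.ofReal (Real.exp ⟪xs (ψ n), y⟫)) atTop ∂μ
            ≤ liminf (fun n => laplace μ (xs (ψ n))) atTop :=
          lintegral_liminf_le fun n => laplace_meas _
        refine le_trans ?_ h1
        calc (⊤ : ℝ≥0∞) = ⊤ * μ S := by rw [ENNReal.top_mul hS]
          _ = ∫⁻ _ in S, ⊤ ∂μ := by rw [setLIntegral_const]
          _ ≤ ∫⁻ y, liminf (fun n => ENNReal.ofReal (Real.exp ⟪xs (ψ n), y⟫)) atTop ∂μ := by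
              rw [← lintegral_indicator hSmeas]
              apply lintegral_mono
              intro y
              by_cases hy : y ∈ S
              · rw [Set.indicator_of_mem hy]
                exact le_of_eq ((hlim y hy).liminf_eq).symm
              · simp [Set.indicator_of_notMem hy]
      have heq : liminf (fun n => laplace μ (xs (ψ n))) atTop = m :=
        (htend.comp hψmono.tendsto_atTop).liminf_eq
      rw [heq] at hge
      exact hmtop.ne (top_le_iff.mp hge)
end
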